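/- Let ε₁ > 0, ε₂ > 0, k < 0 and λ ∈ ℝ. Then there exist an invertible affine map T : ℝ³ → ℝ³, a real constant β ≠ 0, and parameters ε > 0 and μ, a, b, c ∈ ℝ, such that for every differentiable solution u : ℝ → ℝ³ of the Koper system ε₁ ẋ = k y − x³ + 3x − λ, ẏ = x − 2y + z, ż = ε₂ (y − z), the function s ↦ T(u(β s)) is a solution of the cubic singular Hopf normal form ẋ = (y − x² − x³)/ε, ẏ = z − x, ż = −μ − a x − b y − c z. In other words, the Koper vector field can be transformed into the cubic singular Hopf normal form by an affine coordinate change and a time rescaling. -/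

import Mathlib

/-- Auxiliary linear part of the Koper-to-singular-Hopf coordinate change. -/
noncomputable def koperLinear (k : ℝ) (hk0 : k ≠ 0) :
    (ℝ × ℝ × ℝ) ≃ₗ[ℝ] (ℝ × ℝ × ℝ) where
  toFun p := (p.1 / 3, k * p.2.1 / 27, (2 * p.2.1 - p.2.2) / 3)
  invFun q := (3 * q.1, 27 * q.2.1 / k, 54 * q.2.1 / k - 3 * q.2.2)
  map_add' p q := by
    refine Prod.ext ?_ (Prod.ext ?_ ?_) <;> simp <;> ring
  map_smul' r p := by
    refine Prod.ext ?_ (Prod.ext ?_ ?_) <;>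
      simp [Prod.smul_fst, Prod.smul_snd, smul_eq_mul] <;> ring
  left_inv p := by
    refine Prod.ext ?_ (Prod.ext ?_ ?_) <;> field_simp <;> ring
  right_inv q := by
    refine Prod.ext ?_ (Prod.ext ?_ ?_) <;> field_simp <;> ring

/-- Auxiliary affine coordinate change for the Koper system. -/
noncomputable def koperAffine (k lam : ℝ) (hk0 : k ≠ 0) :
    (ℝ × ℝ × ℝ) ≃ᵃ[ℝ] (ℝ × ℝ × ℝ) where
  toEquiv :=
  { toFun := fun p =>
      (p.1 / 3 - 1 / 3, (k * p.2.1 + 2 - lam) / 27, (2 * p.2.1 - p.2.2 - 1) / 3)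
    invFun := fun q =>
      (3 * q.1 + 1, (27 * q.2.1 - 2 + lam) / k,
        (54 * q.2.1 - 4 + 2 * lam) / k - 3 * q.2.2 - 1)
    left_inv := by
      intro p
      refine Prod.ext ?_ (Prod.ext ?_ ?_) <;> field_simp <;> ring
    right_inv := by
      intro q
      refine Prod.ext ?_ (Prod.ext ?_ ?_) <;> field_simp <;> ring }
  linear := koperLinear k hk0
  map_vadd' p v := by
    refine Prod.ext ?_ (Prod.ext ?_ ?_) <;>
      simp [koperLinear, vadd_eq_add] <;> ring

theorem koperAffine_apply (k lam : ℝ) (hk0 : k ≠ 0) (p : ℝ × ℝ × ℝ) :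
    koperAffine k lam hk0 p =
      (p.1 / 3 - 1 / 3, (k * p.2.1 + 2 - lam) / 27,
        (2 * p.2.1 - p.2.2 - 1) / 3) := rfl

/-- The Koper system
`ε₁ ẋ = k y − x³ + 3x − λ, ẏ = x − 2y + z, ż = ε₂(y − z)` (with
`ε₁, ε₂ > 0`, `k < 0`) can be transformed into the cubic singular Hopf normal
form `ẋ = (y − x² − x³)/ε, ẏ = z − x, ż = −μ − a x − b y − c z` by an
invertible affine coordinate change `T` and a time rescaling `t = β s`. -/
theorem koper_to_cubic_singular_hopf
    (ε₁ ε₂ k lam : ℝ) (hε₁ : 0 < ε₁) (hε₂ : 0 < ε₂) (hk : k < 0) :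
    ∃ (T : (ℝ × ℝ × ℝ) ≃ᵃ[ℝ] (ℝ × ℝ × ℝ)) (β : ℝ), β ≠ 0 ∧
      ∃ (ε μ a b c : ℝ), 0 < ε ∧
        ∀ u : ℝ → ℝ × ℝ × ℝ,
          (∀ t, HasDerivAt u
            ((k * (u t).2.1 - (u t).1 ^ 3 + 3 * (u t).1 - lam) / ε₁,
              (u t).1 - 2 * (u t).2.1 + (u t).2.2,
              ε₂ * ((u t).2.1 - (u t).2.2)) t) →
          ∀ s, HasDerivAt (fun s => T (u (β * s)))
            (((T (u (β * s))).2.1 - (T (u (β * s))).1 ^ 2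
                - (T (u (β * s))).1 ^ 3) / ε,
              (T (u (β * s))).2.2 - (T (u (β * s))).1,
              -μ - a * (T (u (β * s))).1 - b * (T (u (β * s))).2.1
                - c * (T (u (β * s))).2.2) s := by
  have hk0 : k ≠ 0 := ne_of_lt hk
  have hε₁0 : ε₁ ≠ 0 := ne_of_gt hε₁
  refine ⟨koperAffine k lam hk0, -9 / k, div_ne_zero (by norm_num) hk0,
    ε₁ * (-k) / 81, 3 * ε₂ * (lam - 2) / k ^ 2 - 3 * ε₂ / k, 18 / k,
    81 * ε₂ / k ^ 2, -9 * (2 + ε₂) / k,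
    div_pos (mul_pos hε₁ (neg_pos.mpr hk)) (by norm_num), ?_⟩
  intro u hu s
  set β : ℝ := -9 / k with hβ
  have hb : HasDerivAt (fun s : ℝ => β * s) β s := by
    simpa using (hasDerivAt_id s).const_mul β
  have hw : HasDerivAt (fun s => u (β * s))
      (β • ((k * (u (β * s)).2.1 - (u (β * s)).1 ^ 3 + 3 * (u (β * s)).1 - lam) / ε₁,
        (u (β * s)).1 - 2 * (u (β * s)).2.1 + (u (β * s)).2.2,
        ε₂ * ((u (β * s)).2.1 - (u (β * s)).2.2))) s :=
    (hu (β * s)).scomp s hb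
  have hx : HasDerivAt (fun s => (u (β * s)).1)
      (β * ((k * (u (β * s)).2.1 - (u (β * s)).1 ^ 3 + 3 * (u (β * s)).1 - lam) / ε₁)) s :=
    hw.fst
  have hy : HasDerivAt (fun s => (u (β * s)).2.1)
      (β * ((u (β * s)).1 - 2 * (u (β * s)).2.1 + (u (β * s)).2.2)) s := hw.snd.fst
  have hz : HasDerivAt (fun s => (u (β * s)).2.2)
      (β * (ε₂ * ((u (β * s)).2.1 - (u (β * s)).2.2))) s := hw.snd.snd
  have h1 : HasDerivAt (fun s => (u (β * s)).1 / 3 - 1 / 3)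
      (β * ((k * (u (β * s)).2.1 - (u (β * s)).1 ^ 3 + 3 * (u (β * s)).1 - lam) / ε₁) / 3) s :=
    (hx.div_const 3).sub_const _
  have h2 : HasDerivAt (fun s => (k * (u (β * s)).2.1 + 2 - lam) / 27)
      (k * (β * ((u (β * s)).1 - 2 * (u (β * s)).2.1 + (u (β * s)).2.2)) / 27) s :=
    (((hy.const_mul k).add_const 2).sub_const lam).div_const 27
  have h3 : HasDerivAt (fun s => (2 * (u (β * s)).2.1 - (u (β * s)).2.2 - 1) / 3)
      ((2 * (β * ((u (β * s)).1 - 2 * (u (β * s)).2.1 + (u (β * s)).2.2))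
        - β * (ε₂ * ((u (β * s)).2.1 - (u (β * s)).2.2))) / 3) s :=
    (((hy.const_mul 2).sub hz).sub_const 1).div_const 3
  have hD := h1.prodMk (h2.prodMk h3)
  have hfun : (fun s => koperAffine k lam hk0 (u (β * s))) =
      fun s => ((u (β * s)).1 / 3 - 1 / 3, (k * (u (β * s)).2.1 + 2 - lam) / 27,
        (2 * (u (β * s)).2.1 - (u (β * s)).2.2 - 1) / 3) := by
    funext s; rw [koperAffine_apply]
  rw [hfun, koperAffine_apply]
  set x : ℝ := (u (β * s)).1
  set y : ℝ := (u (β * s)).2.1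
  set z : ℝ := (u (β * s)).2.2
  clear_value x y z
  convert hD using 2 <;> rw [hβ] <;> field_simp
  all_goals first
    | ring1
    | (constructor <;> ring1)
    | (refine Prod.ext ?_ ?_ <;> dsimp only <;> field_simp <;> ring1)
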